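/- Let n ≥ 1, let Ω ⊂ ℝⁿ be a bounded open set, and let r* ∈ (0,1). Let λ : (0,r*) → [0,∞) be continuous and nonincreasing such that r ↦ r^α·e^{λ(r)} is nondecreasing on (0,r*) and r^α·e^{λ(r)} → 0 as r → 0⁺. Let 1 < p < q, let 0 < q − p ≤ α ≤ 1, let A > 0, and let a : Ω → [0,∞) satisfy |a(x)−a(y)| ≤ A·|x−y|^α·e^{λ(|x−y|)} for all x, y ∈ Ω with 0 < |x−y| < r*. Define g(x,v) := v^(p−1) + a(x)·v^(q−1). Then for every K ≥ 1 there exist r₀ ∈ (0, r*/2) and c₂ > 0 such that for every x₀ ∈ ℝⁿ, every r ∈ (0, r₀] with the ball B_{8r}(x₀) contained in Ω, all x₁, x₂ ∈ B_r(x₀), and every v with r ≤ v ≤ K: g(x₁, v/r) ≤ c₂·e^{λ(r)}·g(x₂, v/r). -/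

import Mathlib

/-- The non-logarithmic continuity condition (g₃) for the double-phase model
`g(x,v) = v^(p−1) + a(x)·v^(q−1)`, under the non-log modulus-of-continuity
assumption `|a(x)−a(y)| ≤ A·|x−y|^α·e^{λ(|x−y|)}`. -/
theorem condition_g3_double_phase
    (n : ℕ) (hn : 1 ≤ n)
    (Ω : Set (EuclideanSpace ℝ (Fin n)))
    (hΩ_open : IsOpen Ω) (hΩ_bdd : Bornology.IsBounded Ω)
    (rstar : ℝ) (hrstar : rstar ∈ Set.Ioo (0:ℝ) 1)
    (lam : ℝ → ℝ) (α : ℝ)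
    (hlam_cont : ContinuousOn lam (Set.Ioo 0 rstar))
    (hlam_nonneg : ∀ r ∈ Set.Ioo (0:ℝ) rstar, 0 ≤ lam r)
    (hlam_anti : AntitoneOn lam (Set.Ioo 0 rstar))
    (hlam_mono : MonotoneOn (fun r => r ^ α * Real.exp (lam r)) (Set.Ioo 0 rstar))
    (hlam_lim : Filter.Tendsto (fun r => r ^ α * Real.exp (lam r))
      (nhdsWithin 0 (Set.Ioi 0)) (nhds 0))
    (p q : ℝ) (hp : 1 < p) (hpq : p < q)
    (hα₁ : 0 < q - p) (hα₂ : q - p ≤ α) (hα₃ : α ≤ 1)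
    (A : ℝ) (hA : 0 < A)
    (a : EuclideanSpace ℝ (Fin n) → ℝ) (ha_nonneg : ∀ x ∈ Ω, 0 ≤ a x)
    (hholder : ∀ x ∈ Ω, ∀ y ∈ Ω, 0 < dist x y → dist x y < rstar →
      |a x - a y| ≤ A * dist x y ^ α * Real.exp (lam (dist x y))) :
    ∀ K : ℝ, 1 ≤ K → ∃ r₀ : ℝ, 0 < r₀ ∧ r₀ < rstar / 2 ∧ ∃ c₂ > (0:ℝ),
      ∀ x₀ : EuclideanSpace ℝ (Fin n), ∀ r : ℝ, 0 < r → r ≤ r₀ →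
        Metric.ball x₀ (8 * r) ⊆ Ω →
        ∀ x₁ ∈ Metric.ball x₀ r, ∀ x₂ ∈ Metric.ball x₀ r,
          ∀ v : ℝ, r ≤ v → v ≤ K →
            (v / r) ^ (p - 1) + a x₁ * (v / r) ^ (q - 1) ≤
              c₂ * Real.exp (lam r) *
                ((v / r) ^ (p - 1) + a x₂ * (v / r) ^ (q - 1)) := by

  intro K hK
  obtain ⟨hrs0, hrs1⟩ := hrstar
  have hK0 : (0:ℝ) < K := lt_of_lt_of_le one_pos hK
  refine ⟨rstar/4, by linarith, by linarith,
    1 + A * 2 ^ α * K ^ (q - p), by positivity, ?_⟩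
  intro x₀ r hr hrr₀ hball x₁ hx₁ x₂ hx₂ v hv hvK
  have hr1 : r < 1 := by linarith
  have hΩ1 : x₁ ∈ Ω := hball (Metric.ball_subset_ball (by linarith) hx₁)
  have hΩ2 : x₂ ∈ Ω := hball (Metric.ball_subset_ball (by linarith) hx₂)
  have hrmem : r ∈ Set.Ioo (0:ℝ) rstar := ⟨hr, by linarith⟩
  have h2rmem : 2*r ∈ Set.Ioo (0:ℝ) rstar := ⟨by linarith, by linarith⟩
  have hE1 : (1:ℝ) ≤ Real.exp (lam r) :=
    Real.one_le_exp (hlam_nonneg r hrmem)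
  set w := v / r with hw
  have hw1 : (1:ℝ) ≤ w := (one_le_div hr).2 hv
  have hw0 : (0:ℝ) < w := lt_of_lt_of_le one_pos hw1
  -- key: a x₁ ≤ a x₂ + A * 2^α * r^α * exp (lam r)
  have hkey : a x₁ ≤ a x₂ + A * 2 ^ α * r ^ α * Real.exp (lam r) := by
    rcases eq_or_ne x₁ x₂ with h | h
    · have : (0:ℝ) ≤ A * 2 ^ α * r ^ α * Real.exp (lam r) := by positivity
      rw [h]; linarith
    · have hd0 : 0 < dist x₁ x₂ := dist_pos.2 h
      have hd2r : dist x₁ x₂ < 2*r := by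
        have h1 := Metric.mem_ball.1 hx₁
        have h2 := Metric.mem_ball.1 hx₂
        calc dist x₁ x₂ ≤ dist x₁ x₀ + dist x₀ x₂ := dist_triangle _ _ _
          _ < r + r := by rw [dist_comm x₀ x₂]; linarith
          _ = 2*r := by ring
      have hdrs : dist x₁ x₂ < rstar := by linarith
      have h1 := hholder x₁ hΩ1 x₂ hΩ2 hd0 hdrs
      have h2 : dist x₁ x₂ ^ α * Real.exp (lam (dist x₁ x₂)) ≤
          (2*r) ^ α * Real.exp (lam (2*r)) :=
        hlam_mono ⟨hd0, hdrs⟩ h2rmem hd2r.le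
      have h3 : Real.exp (lam (2*r)) ≤ Real.exp (lam r) :=
        Real.exp_le_exp.2 (hlam_anti hrmem h2rmem (by linarith))
      have h4 : (2*r) ^ α = 2 ^ α * r ^ α := Real.mul_rpow (by norm_num) hr.le
      have h5 : A * dist x₁ x₂ ^ α * Real.exp (lam (dist x₁ x₂)) ≤
          A * 2 ^ α * r ^ α * Real.exp (lam r) := by
        have h6 : (2*r) ^ α * Real.exp (lam (2*r)) ≤ 2 ^ α * r ^ α * Real.exp (lam r) := by
          rw [h4]
          have : (0:ℝ) ≤ 2 ^ α * r ^ α := by positivity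
          nlinarith
        calc A * dist x₁ x₂ ^ α * Real.exp (lam (dist x₁ x₂))
            = A * (dist x₁ x₂ ^ α * Real.exp (lam (dist x₁ x₂))) := by ring
          _ ≤ A * (2 ^ α * r ^ α * Real.exp (lam r)) := by
              apply mul_le_mul_of_nonneg_left _ hA.le
              exact h2.trans h6
          _ = A * 2 ^ α * r ^ α * Real.exp (lam r) := by ring
      have := abs_le.1 h1
      linarith [h5, this.1, this.2]
  -- second key: r^α * w^(q-1) ≤ K^(q-p) * w^(p-1)
  have hRQ : r ^ α * w ^ (q-1) ≤ K ^ (q-p) * w ^ (p-1) := by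
    have hsplit : w ^ (q-1) = w ^ (q-p) * w ^ (p-1) := by
      rw [← Real.rpow_add hw0]; ring_nf
    have hwK : w ≤ K / r := by rw [hw]; gcongr
    have h7 : w ^ (q-p) ≤ (K/r) ^ (q-p) :=
      Real.rpow_le_rpow hw0.le hwK hα₁.le
    have h8 : r ^ α * (K/r) ^ (q-p) ≤ K ^ (q-p) := by
      rw [Real.div_rpow hK0.le hr.le]
      have h9 : r ^ (α - (q-p)) ≤ 1 :=
        Real.rpow_le_one hr.le hr1.le (by linarith)
      calc r ^ α * (K ^ (q-p) / r ^ (q-p)) = K ^ (q-p) * (r ^ α / r ^ (q-p)) := by ring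
        _ = K ^ (q-p) * r ^ (α - (q-p)) := by rw [← Real.rpow_sub hr]
        _ ≤ K ^ (q-p) * 1 := by
            apply mul_le_mul_of_nonneg_left h9 (by positivity)
        _ = K ^ (q-p) := by ring
    calc r ^ α * w ^ (q-1) = (r ^ α * w ^ (q-p)) * w ^ (p-1) := by rw [hsplit]; ring
      _ ≤ (r ^ α * (K/r) ^ (q-p)) * w ^ (p-1) := by
          apply mul_le_mul_of_nonneg_right _ (by positivity)
          exact mul_le_mul_of_nonneg_left h7 (by positivity)
      _ ≤ K ^ (q-p) * w ^ (p-1) := mul_le_mul_of_nonneg_right h8 (by positivity)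
  have ha2 : 0 ≤ a x₂ := ha_nonneg x₂ hΩ2
  have hP : (0:ℝ) < w ^ (p-1) := Real.rpow_pos_of_pos hw0 _
  have hQ : (0:ℝ) < w ^ (q-1) := Real.rpow_pos_of_pos hw0 _
  set E := Real.exp (lam r)
  set P := w ^ (p-1)
  set Q := w ^ (q-1)
  have hB : (0:ℝ) < A * 2 ^ α * K ^ (q-p) := by positivity
  have hrα : (0:ℝ) < r ^ α := Real.rpow_pos_of_pos hr _
  calc P + a x₁ * Q ≤ P + (a x₂ + A * 2 ^ α * r ^ α * E) * Q := by nlinarith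
    _ = (P + a x₂ * Q) + (A * 2 ^ α) * E * (r ^ α * Q) := by ring
    _ ≤ (P + a x₂ * Q) + (A * 2 ^ α) * E * (K ^ (q-p) * P) := by
        apply add_le_add_right
        apply mul_le_mul_of_nonneg_left hRQ (by positivity)
    _ ≤ E * (P + a x₂ * Q) + (A * 2 ^ α * K ^ (q-p)) * E * (P + a x₂ * Q) := by
        have h10 : P + a x₂ * Q ≤ E * (P + a x₂ * Q) := by
          nlinarith [mul_nonneg (by linarith : (0:ℝ) ≤ E - 1) (by positivity : (0:ℝ) ≤ P + a x₂ * Q)]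
        have h11 : (A * 2 ^ α) * E * (K ^ (q-p) * P) ≤
            (A * 2 ^ α * K ^ (q-p)) * E * (P + a x₂ * Q) := by
          have hE0 : (0:ℝ) < E := lt_of_lt_of_le one_pos hE1
          nlinarith [mul_pos (mul_pos hB hE0) hQ, mul_nonneg (mul_nonneg (mul_nonneg hB.le hE0.le) ha2) hQ.le]
        linarith
    _ = (1 + A * 2 ^ α * K ^ (q-p)) * E * (P + a x₂ * Q) := by ring
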